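/- For n ≥ 1 and 0 ≤ m ≤ n, the coefficient of q^m in the power series -q·F_{n-1}(q)/F_n(q) ∈ ℚ[[q]] equals (-1)^m C_{m-1} for m ≥ 1, and equals 0 for m = 0. -/

import Mathlib

open PowerSeries

noncomputable def qFibS : ℕ → PowerSeries ℚ
  | 0 => 1
  | 1 => 1
  | n + 2 => qFibS (n + 1) + PowerSeries.X * qFibS n

noncomputable def Hcat : PowerSeries ℚ :=
  PowerSeries.mk fun m => if m = 0 then 0 else (-1) ^ m * catalan (m - 1)

lemma Hcat_coeff_zero : PowerSeries.coeff (R := ℚ) 0 Hcat = 0 := by simp [Hcat]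

lemma Hcat_coeff {m : ℕ} (h : m ≠ 0) :
    PowerSeries.coeff (R := ℚ) m Hcat = (-1) ^ m * catalan (m - 1) := by
  simp [Hcat, h]

lemma X_dvd_Hcat : (PowerSeries.X : PowerSeries ℚ) ∣ Hcat := by
  rw [PowerSeries.X_dvd_iff, ← PowerSeries.coeff_zero_eq_constantCoeff_apply]
  exact Hcat_coeff_zero

lemma Hcat_sq : Hcat * Hcat = Hcat + PowerSeries.X := by
  ext m
  rw [PowerSeries.coeff_mul,
    Finset.Nat.sum_antidiagonal_eq_sum_range_succ
      (fun a b => PowerSeries.coeff (R := ℚ) a Hcat * PowerSeries.coeff (R := ℚ) b Hcat) m]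
  match m with
  | 0 => simp [Hcat]
  | 1 => simp [Hcat, Finset.sum_range_succ]
  | k + 2 =>
    rw [Finset.sum_range_succ', Finset.sum_range_succ]
    have h0 : PowerSeries.coeff (R := ℚ) 0 Hcat = 0 := Hcat_coeff_zero
    have hend : PowerSeries.coeff (R := ℚ) (k + 2 - (k + 1 + 1)) Hcat = 0 := by
      simpa using h0
    rw [hend, h0]
    simp only [mul_zero, zero_mul, add_zero]
    have : ∀ i ∈ Finset.range (k + 1),
        PowerSeries.coeff (R := ℚ) (i + 1) Hcat * PowerSeries.coeff (R := ℚ) (k + 2 - (i + 1)) Hcat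
          = (-1) ^ (k + 2) * ((catalan i : ℚ) * catalan (k - i)) := by
      intro i hi
      have hik : i ≤ k := by simpa using Nat.lt_succ_iff.mp (Finset.mem_range.mp hi)
      have h1 : (i + 1 : ℕ) ≠ 0 := by omega
      have h2 : (k + 2 - (i + 1) : ℕ) ≠ 0 := by omega
      rw [Hcat_coeff h1, Hcat_coeff h2]
      have e1 : (i + 1) - 1 = i := by omega
      have e2 : (k + 2 - (i + 1)) - 1 = k - i := by omega
      rw [e1, e2]
      have : k + 2 - (i + 1) = k + 1 - i := by omega
      rw [this]
      have hpow : ((-1 : ℚ)) ^ (i + 1) * ((-1 : ℚ)) ^ (k + 1 - i) = (-1) ^ (k + 2) := by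
        rw [← pow_add]
        have : i + 1 + (k + 1 - i) = k + 2 := by omega
        rw [this]
      rw [mul_mul_mul_comm, hpow]
    rw [Finset.sum_congr rfl this, ← Finset.mul_sum]
    have hcat : (catalan (k + 1) : ℚ) = ∑ i ∈ Finset.range (k + 1), (catalan i : ℚ) * catalan (k - i) := by
      rw_mod_cast [catalan_succ, ← Finset.sum_range fun i => catalan i * catalan (k - i)]
    have hm : PowerSeries.coeff (R := ℚ) (k + 2) (Hcat + PowerSeries.X) = (-1) ^ (k + 2) * catalan (k + 1) := by
      rw [map_add, Hcat_coeff (by omega : (k + 2 : ℕ) ≠ 0), PowerSeries.coeff_X, if_neg (show ¬(k + 2 = 1) by omega),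
        show k + 2 - 1 = k + 1 from rfl]
      ring
    rw [hm, hcat]

lemma qFib_const (n : ℕ) : PowerSeries.constantCoeff (R := ℚ) (qFibS n) = 1 := by
  induction n using Nat.strong_induction_on with
  | _ n ih =>
    match n with
    | 0 => simp [qFibS]
    | 1 => simp [qFibS]
    | n + 2 =>
      simp [qFibS, ih n (by omega), ih (n + 1) (by omega)]

lemma qFib_rec (n : ℕ) (hn : 1 ≤ n) :
    qFibS (n + 1) = qFibS n + PowerSeries.X * qFibS (n - 1) := by
  obtain ⟨k, rfl⟩ : ∃ k, n = k + 1 := ⟨n - 1, by omega⟩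
  simp [qFibS]

lemma Ddvd (n : ℕ) (hn : 1 ≤ n) :
    (PowerSeries.X : PowerSeries ℚ) ^ (n + 1) ∣
      qFibS n * Hcat + PowerSeries.X * qFibS (n - 1) := by
  induction n with
  | zero => omega
  | succ n ih =>
    rcases Nat.eq_or_lt_of_le hn with h | h
    · -- n + 1 = 1, so n = 0
      have hn0 : n = 0 := by omega
      subst hn0
      simp only [qFibS, one_mul, mul_one, Nat.add_sub_cancel]
      rw [← Hcat_sq, show ((0:ℕ)+1+1) = 2 from rfl, pow_two]
      exact mul_dvd_mul X_dvd_Hcat X_dvd_Hcat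
    · have hn1 : 1 ≤ n := by omega
      have hD := ih hn1
      rw [qFib_rec n hn1]
      have hstep : (qFibS n + PowerSeries.X * qFibS (n - 1)) * Hcat
            + PowerSeries.X * qFibS (n + 1 - 1)
          = Hcat * (qFibS n * Hcat + PowerSeries.X * qFibS (n - 1)) := by
        have : Hcat * Hcat = Hcat + PowerSeries.X := Hcat_sq
        simp only [Nat.add_sub_cancel]
        linear_combination (-(qFibS n)) * this
      rw [hstep, show (PowerSeries.X : PowerSeries ℚ) ^ (n + 1 + 1)
        = PowerSeries.X * PowerSeries.X ^ (n + 1) by ring]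
      exact mul_dvd_mul X_dvd_Hcat hD

theorem coeff_neg_X_mul_ratio (n : ℕ) (hn : 1 ≤ n) :
    PowerSeries.coeff (R := ℚ) 0 (-(PowerSeries.X * qFibS (n - 1) * (qFibS n)⁻¹)) = 0 ∧
      ∀ m, 1 ≤ m → m ≤ n →
        PowerSeries.coeff (R := ℚ) m (-(PowerSeries.X * qFibS (n - 1) * (qFibS n)⁻¹)) =
          (-1) ^ m * catalan (m - 1) := by
  have hu : (PowerSeries.constantCoeff (R := ℚ)) (qFibS n) ≠ 0 := by
    rw [qFib_const]; norm_num
  have hinv : qFibS n * (qFibS n)⁻¹ = 1 := PowerSeries.mul_inv_cancel _ hu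
  have key : -(PowerSeries.X * qFibS (n - 1) * (qFibS n)⁻¹)
      = Hcat - (qFibS n * Hcat + PowerSeries.X * qFibS (n - 1)) * (qFibS n)⁻¹ := by
    linear_combination Hcat * hinv
  have hdvd : (PowerSeries.X : PowerSeries ℚ) ^ (n + 1) ∣
      (qFibS n * Hcat + PowerSeries.X * qFibS (n - 1)) * (qFibS n)⁻¹ :=
    dvd_mul_of_dvd_left (Ddvd n hn) _
  have hz : ∀ m, m ≤ n → PowerSeries.coeff (R := ℚ) m
      ((qFibS n * Hcat + PowerSeries.X * qFibS (n - 1)) * (qFibS n)⁻¹) = 0 :=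
    fun m hm => (PowerSeries.X_pow_dvd_iff.mp hdvd) m (by omega)
  constructor
  · rw [key, map_sub, hz 0 (by omega), Hcat_coeff_zero, sub_zero]
  · intro m hm1 hmn
    rw [key, map_sub, hz m hmn, Hcat_coeff (by omega : m ≠ 0), sub_zero]
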